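/- No anti-Jacobsthal number is divisible by 3; i.e., for the anti-recurrence sequence A with a = (2,1), A_n ≢ 0 (mod 3) for all n ≥ 1. -/
import Mathlib


/-- `A` and `B` (indexed from 1) are complementary strictly increasing sequences
of positive integers: every positive integer lies in exactly one of their ranges. -/
def CompPair (A B : ℕ → ℕ) : Prop :=
  StrictMonoOn A (Set.Ici 1) ∧ StrictMonoOn B (Set.Ici 1) ∧
  (∀ n, 1 ≤ n → 1 ≤ A n) ∧ (∀ n, 1 ≤ n → 1 ≤ B n) ∧
  ∀ m, 1 ≤ m →
    ((∃ n, 1 ≤ n ∧ A n = m) ∧ ¬(∃ n, 1 ≤ n ∧ B n = m)) ∨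
    (¬(∃ n, 1 ≤ n ∧ A n = m) ∧ (∃ n, 1 ≤ n ∧ B n = m))

/-- `(A, B)` is the anti-recurrence pair for the positive linear form `a` of dimension `k`:
`A n = Σ_{j=1}^k a_j * B_{(n-1)k+j}` for all `n ≥ 1`. -/
def AntiRec (k : ℕ) (a : Fin k → ℕ) (A B : ℕ → ℕ) : Prop :=
  CompPair A B ∧
  ∀ n, 1 ≤ n → A n = ∑ j : Fin k, a j * B ((n - 1) * k + (j : ℕ) + 1)

/-- No anti-Jacobsthal number is divisible by 3. -/
theorem stmt7 (A B : ℕ → ℕ) (h : AntiRec 2 ![2, 1] A B) :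
    ∀ n, 1 ≤ n → A n % 3 ≠ 0 := by
  obtain ⟨⟨hAmono, hBmono, hApos, hBpos, hcomp⟩, hrec⟩ := h
  have hAle : ∀ a b, 1 ≤ a → a ≤ b → A a ≤ A b := by
    intro a b ha hab
    rcases eq_or_lt_of_le hab with rfl | hlt
    · exact le_rfl
    · exact le_of_lt (hAmono (Set.mem_Ici.mpr ha) (Set.mem_Ici.mpr (ha.trans hab)) hlt)
  have hBle : ∀ a b, 1 ≤ a → a ≤ b → B a ≤ B b := by
    intro a b ha hab
    rcases eq_or_lt_of_le hab with rfl | hlt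
    · exact le_rfl
    · exact le_of_lt (hBmono (Set.mem_Ici.mpr ha) (Set.mem_Ici.mpr (ha.trans hab)) hlt)
  have hBlt : ∀ a b, 1 ≤ a → a < b → B a < B b := by
    intro a b ha hab
    exact hBmono (Set.mem_Ici.mpr ha) (Set.mem_Ici.mpr (ha.trans hab.le)) hab
  have hrec' : ∀ n, 1 ≤ n → A n = 2 * B (2*n - 1) + B (2*n) := by
    intro n hn
    have h0 : (n - 1) * 2 + (0 : ℕ) + 1 = 2*n - 1 := by omega
    have h1 : (n - 1) * 2 + (1 : ℕ) + 1 = 2*n := by omega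
    have := hrec n hn
    rw [Fin.sum_univ_two] at this
    have h2 : 2*n - 1 + 1 = 2*n := by omega
    simpa [h0, h1, h2] using this
  -- A grows by at least 6
  have hstep : ∀ p, 1 ≤ p → A p + 6 ≤ A (p + 1) := by
    intro p hp
    have e1 := hrec' p hp
    have e2 := hrec' (p+1) (by omega)
    have i1 : 2*(p+1) - 1 = 2*p + 1 := by omega
    have i2 : 2*(p+1) = 2*p + 2 := by omega
    rw [i1, i2] at e2
    have b1 : B (2*p - 1) < B (2*p) := hBlt _ _ (by omega) (by omega)
    have b2 : B (2*p) < B (2*p + 1) := hBlt _ _ (by omega) (by omega)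
    have b3 : B (2*p + 1) < B (2*p + 2) := hBlt _ _ (by omega) (by omega)
    omega
  intro n hn hmod
  have e := hrec' n hn
  set x := B (2*n - 1) with hx
  set y := B (2*n) with hy
  have hxy : x < y := hBlt _ _ (by omega) (by omega)
  have hx1 : 1 ≤ x := hBpos _ (by omega)
  -- 3 ∣ 2x + y and x < y force y ≥ x + 3
  have hy3 : x + 3 ≤ y := by omega
  -- x+1 and x+2 are not in the range of B
  have hnotB : ∀ m, x < m → m < y → ¬ ∃ i, 1 ≤ i ∧ B i = m := by
    rintro m hm1 hm2 ⟨i, hi, rfl⟩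
    rcases le_or_gt i (2*n - 1) with hle | hgt
    · exact absurd (hBle i (2*n-1) hi hle) (by omega)
    · exact absurd (hBle (2*n) i (by omega) (by omega)) (by omega)
  have hinA : ∀ m, x < m → m < y → ∃ i, 1 ≤ i ∧ A i = m := by
    intro m hm1 hm2
    rcases hcomp m (by omega) with ⟨hA, _⟩ | ⟨_, hB⟩
    · exact hA
    · exact absurd hB (hnotB m hm1 hm2)
  obtain ⟨p, hp, hAp⟩ := hinA (x+1) (by omega) (by omega)
  obtain ⟨q, hq, hAq⟩ := hinA (x+2) (by omega) (by omega)
  have hpq : p < q := by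
    by_contra hc
    have := hAle q p hq (by omega)
    omega
  have h6 := hstep p hp
  have := hAle (p+1) q (by omega) (by omega)
  omega
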